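/- arXiv:2308.15595 — 2 statements merged into one kernel-verified Lean document; each statement's English description precedes it below -/
import Mathlib

section
/- Let q be a prime power, n ≥ 2 an integer, and a, b ∈ F_q^*. Let α, β ∈ F_{q^n} satisfy Norm_{F_{q^n}/F_q}(α) = a and Tr_{F_{q^n}/F_q}(β) = b. Then the number of pairs (x, y) ∈ F_{q^n} × F_{q^n} satisfying y^q − y = α·x^{q−1} − β equals q(q−1)·N_n(a,b). (Equivalently, N_n(a,b) = (#X(F_{q^n}) − 1)/(q(q−1)), where #X(F_{q^n}) is one more than the number of affine solutions, accounting for the unique point at infinity of the nonsingular projective Artin–Schreier curve X : y^q − y = α x^{q−1} − β.) -/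
open Polynomial in
lemma aux_card_le_natDegree {F : Type} [Field F] [Fintype F] [DecidableEq F]
    {P : F[X]} (hP : P ≠ 0) {pred : F → Prop} [DecidablePred pred]
    (h : ∀ y, pred y → P.IsRoot y) :
    Fintype.card {y // pred y} ≤ P.natDegree := by
  rw [Fintype.card_subtype]
  calc (Finset.univ.filter pred).card ≤ P.roots.toFinset.card := by
        apply Finset.card_le_card
        intro y hy
        rw [Multiset.mem_toFinset, mem_roots hP]
        exact h y (Finset.mem_filter.mp hy).2
    _ ≤ Multiset.card P.roots := Multiset.toFinset_card_le _
    _ ≤ P.natDegree := P.card_roots'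

lemma aux_geom (q : ℕ) (hq : 1 ≤ q) :
    ∀ n : ℕ, (∑ i ∈ Finset.range n, q ^ i) * (q - 1) = q ^ n - 1 := by
  intro n
  induction n with
  | zero => simp
  | succ n ih =>
    rw [Finset.sum_range_succ, Nat.add_mul, ih]
    have h1 : 1 ≤ q ^ n := Nat.one_le_pow _ _ hq
    have h3 : q ^ (n + 1) = q ^ n * q := pow_succ q n
    have h4 : q ^ n * (q - 1) = q ^ n * q - q ^ n := by
      rw [Nat.mul_sub, Nat.mul_one]
    have h2 : q ^ n ≤ q ^ n * q := Nat.le_mul_of_pos_right _ hq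
    omega

def auxFiberEquivAdd {G H : Type} [AddCommGroup G] [AddCommGroup H] (L : G →+ H) {c : H}
    (y0 : G) (h0 : L y0 = c) : {y // L y = c} ≃ {y // L y = 0} where
  toFun y := ⟨y.1 - y0, by rw [map_sub, y.2, h0, sub_self]⟩
  invFun z := ⟨z.1 + y0, by rw [map_add, z.2, h0, zero_add]⟩
  left_inv y := by ext; simp
  right_inv z := by ext; simp

def auxFiberEquivMul {G H : Type} [CommGroup G] [CommGroup H] (L : G →* H) {c : H}
    (y0 : G) (h0 : L y0 = c) : {y // L y = c} ≃ {y // L y = 1} where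
  toFun y := ⟨y.1 / y0, by rw [map_div, y.2, h0, div_self']⟩
  invFun z := ⟨z.1 * y0, by rw [map_mul, z.2, h0, one_mul]⟩
  left_inv y := by ext; simp
  right_inv z := by ext; simp

lemma aux_ker_range_card_mul {G H : Type} [Group G] [Group H] (L : G →* H) :
    Nat.card L.range * Nat.card L.ker = Nat.card G := by
  rw [Subgroup.card_eq_card_quotient_mul_card_subgroup L.ker]
  congr 1
  exact (Nat.card_congr (QuotientGroup.quotientKerEquivRange L).toEquiv).symm

lemma aux_ker_range_card_add {G H : Type} [AddCommGroup G] [AddCommGroup H] (L : G →+ H) :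
    Nat.card L.range * Nat.card L.ker = Nat.card G := by
  rw [AddSubgroup.card_eq_card_quotient_mul_card_addSubgroup L.ker]
  congr 1
  exact (Nat.card_congr (QuotientAddGroup.quotientKerEquivRange L).toEquiv).symm

lemma aux_frob (q : ℕ) (hq : IsPrimePow q) (Fq Fqn : Type) [Field Fq] [Field Fqn]
    [Fintype Fq] [Finite Fqn] [Algebra Fq Fqn] (hcard : Fintype.card Fq = q) :
    ∃ φ : Fqn ≃ₐ[Fq] Fqn, ∀ x, φ x = x ^ q := by
  obtain ⟨p, k, hp, hk, rfl⟩ := hq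
  haveI : Fact p.Prime := ⟨hp.nat_prime⟩
  haveI hcFq : CharP Fq p := by
    haveI := ringChar.charP Fq
    obtain ⟨m, hm⟩ := FiniteField.card Fq (ringChar Fq)
    have hdvd : p ∣ (ringChar Fq) ^ (m : ℕ) := by
      rw [← hm.2, hcard]
      exact dvd_pow_self p hk.ne'
    have : p = ringChar Fq :=
      ((Nat.prime_dvd_prime_iff_eq hp.nat_prime hm.1).mp
        (hp.nat_prime.dvd_of_dvd_pow hdvd))
    rw [this]; exact ringChar.charP Fq
  haveI : CharP Fqn p := charP_of_injective_algebraMap' Fq (A := Fqn) p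
  let F : Fqn →ₐ[Fq] Fqn :=
    { toFun := fun x => x ^ p ^ k
      map_one' := one_pow _
      map_mul' := fun x y => mul_pow x y _
      map_zero' := zero_pow (pow_ne_zero k hp.nat_prime.ne_zero)
      map_add' := fun x y => add_pow_char_pow x y p k
      commutes' := fun c => by
        show (algebraMap Fq Fqn) c ^ p ^ k = (algebraMap Fq Fqn) c
        rw [← map_pow]
        congr 1
        rw [← hcard]
        exact FiniteField.pow_card c }
  have hbij : Function.Bijective F :=
    Finite.injective_iff_bijective.mp F.toRingHom.injective
  exact ⟨AlgEquiv.ofBijective F hbij, fun x => rfl⟩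

lemma aux_norm_formula (q n : ℕ) (hq : IsPrimePow q) (hn : 1 ≤ n) (Fq Fqn : Type)
    [Field Fq] [Field Fqn] [Fintype Fq] [Fintype Fqn] [Algebra Fq Fqn]
    (hcard : Fintype.card Fq = q) (hcardn : Fintype.card Fqn = q ^ n) (x : Fqn) :
    algebraMap Fq Fqn (Algebra.norm Fq x) = x ^ (∑ i ∈ Finset.range n, q ^ i) := by
  classical
  have hq2 : 2 ≤ q := hq.two_le
  obtain ⟨φ, hφ⟩ := aux_frob q hq Fq Fqn hcard
  have hfinrank : Module.finrank Fq Fqn = n := by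
    have h := Module.card_eq_pow_finrank (K := Fq) (V := Fqn)
    rw [hcard, hcardn] at h
    exact (Nat.pow_right_injective hq2 h.symm)
  have hcardG : Fintype.card (Fqn ≃ₐ[Fq] Fqn) = n := by
    rw [← Nat.card_eq_fintype_card, IsGalois.card_aut_eq_finrank, hfinrank]
  have hφpow : ∀ (i : ℕ) (y : Fqn), (φ ^ i) y = y ^ q ^ i := by
    intro i
    induction i with
    | zero => intro y; simp
    | succ i ih =>
      intro y
      rw [pow_succ, AlgEquiv.mul_apply, hφ, ih, ← pow_mul, ← pow_succ']
  have horder : orderOf φ = n := by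
    have hφn : φ ^ n = 1 := by
      ext y
      rw [hφpow, AlgEquiv.one_apply, ← hcardn]
      exact FiniteField.pow_card y
    have hd : orderOf φ ∣ n := orderOf_dvd_of_pow_eq_one hφn
    have hd0 : 0 < orderOf φ := orderOf_pos φ
    have hall : ∀ y : Fqn, y ^ q ^ orderOf φ = y := by
      intro y
      have := hφpow (orderOf φ) y
      rw [pow_orderOf_eq_one φ, AlgEquiv.one_apply] at this
      exact this.symm
    have hle : Fintype.card Fqn ≤ q ^ orderOf φ := by
      have h1 : (1:ℕ) < q ^ orderOf φ := Nat.one_lt_pow hd0.ne' hq2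
      calc Fintype.card Fqn
          = Fintype.card {y : Fqn // y ^ q ^ orderOf φ - y = 0} := by
            refine (Fintype.card_congr (Equiv.subtypeUnivEquiv ?_)).symm
            intro y; rw [hall, sub_self]
        _ ≤ (Polynomial.X ^ q ^ orderOf φ - Polynomial.X : Polynomial Fqn).natDegree := by
            refine aux_card_le_natDegree (FiniteField.X_pow_card_sub_X_ne_zero Fqn h1) ?_
            intro y hy
            simp only [Polynomial.IsRoot, Polynomial.eval_sub, Polynomial.eval_pow,
              Polynomial.eval_X]
            exact hy
        _ = q ^ orderOf φ := FiniteField.X_pow_card_sub_X_natDegree_eq Fqn h1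
    rw [hcardn] at hle
    have hnle : n ≤ orderOf φ := (Nat.pow_le_pow_iff_right hq2).mp hle
    exact Nat.le_antisymm (Nat.le_of_dvd (lt_of_lt_of_le Nat.zero_lt_one hn) hd) hnle
  have hbij : Function.Bijective (fun i : Fin n => φ ^ (i : ℕ)) := by
    rw [Fintype.bijective_iff_injective_and_card, Fintype.card_fin, hcardG]
    refine ⟨fun i j hij => ?_, rfl⟩
    have hi : (i : ℕ) ∈ Set.Iio (orderOf φ) := by rw [horder]; exact i.2
    have hj : (j : ℕ) ∈ Set.Iio (orderOf φ) := by rw [horder]; exact j.2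
    exact Fin.ext (pow_injOn_Iio_orderOf hi hj hij)
  rw [Algebra.norm_eq_prod_automorphisms]
  rw [← Fintype.prod_bijective _ hbij (fun i => x ^ q ^ (i : ℕ)) (fun σ => σ x)
    (fun i => (hφpow i x).symm)]
  rw [← Fin.sum_univ_eq_sum_range (fun i => q ^ i) n, ← Finset.prod_pow_eq_pow_sum]

/-- The number of affine points on the Artin–Schreier curve
`y^q - y = α x^(q-1) - β` over `F_{q^n}` equals `q(q-1) · N_n(a,b)`. -/
theorem stmt0 (q n : ℕ) (hq : IsPrimePow q) (hn : 2 ≤ n)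
    (Fq Fqn : Type) [Field Fq] [Field Fqn] [Fintype Fq] [Fintype Fqn]
    [Algebra Fq Fqn]
    (hcard : Fintype.card Fq = q) (hcardn : Fintype.card Fqn = q ^ n)
    (a b : Fq) (ha : a ≠ 0) (hb : b ≠ 0)
    (α β : Fqn) (hα : Algebra.norm Fq α = a) (hβ : Algebra.trace Fq Fqn β = b) :
    Nat.card {p : Fqn × Fqn // p.2 ^ q - p.2 = α * p.1 ^ (q - 1) - β}
      = q * (q - 1) *
        Nat.card {z : Fqn // Algebra.norm Fq z = a ∧ Algebra.trace Fq Fqn z = b} := by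
  classical
  have hq2 : 2 ≤ q := hq.two_le
  have hq0 : q ≠ 0 := by omega
  have hq10 : q - 1 ≠ 0 := by omega
  have hn1 : 1 ≤ n := by omega
  obtain ⟨φ, hφ⟩ := aux_frob q hq Fq Fqn hcard
  have hα0 : α ≠ 0 := Algebra.norm_ne_zero_iff.mp (by rw [hα]; exact ha)
  have htr : ∀ y : Fqn, Algebra.trace Fq Fqn (y ^ q) = Algebra.trace Fq Fqn y := fun y => by
    rw [← hφ y]; exact Algebra.trace_eq_of_algEquiv φ y
  -- the Artin-Schreier additive map
  let L : Fqn →+ Fqn :=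
    { toFun := fun y => y ^ q - y
      map_zero' := by simp [zero_pow hq0]
      map_add' := fun x y => by
        have h : (x + y) ^ q = x ^ q + y ^ q := by rw [← hφ, ← hφ, ← hφ, map_add]
        show (x + y) ^ q - (x + y) = (x ^ q - x) + (y ^ q - y)
        rw [h]; ring }
  have hL : ∀ y, L y = y ^ q - y := fun _ => rfl
  have hTrL : ∀ y, Algebra.trace Fq Fqn (L y) = 0 := fun y => by
    rw [hL, map_sub, htr, sub_self]
  -- cardinality of the kernel of L
  have hker : Fintype.card {y : Fqn // y ^ q - y = 0} = q := by
    apply le_antisymm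
    · calc Fintype.card {y : Fqn // y ^ q - y = 0}
          ≤ (Polynomial.X ^ q - Polynomial.X : Polynomial Fqn).natDegree := by
            refine aux_card_le_natDegree
              (FiniteField.X_pow_card_sub_X_ne_zero Fqn (by omega)) ?_
            intro y hy
            simp only [Polynomial.IsRoot, Polynomial.eval_sub, Polynomial.eval_pow,
              Polynomial.eval_X]
            exact hy
        _ = q := FiniteField.X_pow_card_sub_X_natDegree_eq Fqn (by omega)
    · have hle : Fintype.card Fq ≤ Fintype.card {y : Fqn // y ^ q - y = 0} := by
        apply Fintype.card_le_of_injective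
          (fun c => ⟨algebraMap Fq Fqn c, by
            have h : (algebraMap Fq Fqn c) ^ q = algebraMap Fq Fqn c := by
              rw [← hφ]; exact φ.commutes c
            rw [h, sub_self]⟩)
        intro c d h
        exact (algebraMap Fq Fqn).injective (congrArg Subtype.val h)
      omega
  -- trace kernel has cardinality q^(n-1)
  set Tr' := (Algebra.trace Fq Fqn).toAddMonoidHom with hTr'
  have hcardFqn : Nat.card Fqn = q ^ n := by rw [Nat.card_eq_fintype_card, hcardn]
  have hTrSurj : Function.Surjective (Algebra.trace Fq Fqn) := Algebra.trace_surjective Fq Fqn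
  have hrangeTr : Nat.card Tr'.range = q := by
    rw [← hcard, ← Nat.card_eq_fintype_card]
    exact Nat.card_congr (Equiv.subtypeUnivEquiv (fun c => by
      obtain ⟨y, hy⟩ := hTrSurj c
      exact ⟨y, hy⟩))
  have hqpow : q ^ n = q * q ^ (n - 1) := by
    rw [← pow_succ']
    congr 1
    omega
  have hkerTr : Nat.card Tr'.ker = q ^ (n - 1) := by
    have h1 := aux_ker_range_card_add Tr'
    rw [hrangeTr, hcardFqn, hqpow] at h1
    exact Nat.eq_of_mul_eq_mul_left (by omega) h1
  have hkerL : Nat.card L.ker = q := by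
    rw [Nat.card_eq_fintype_card, ← hker]
    exact Fintype.card_congr (Equiv.subtypeEquivRight (fun y => by
      rw [AddMonoidHom.mem_ker, hL]))
  have hrangeL : Nat.card L.range = q ^ (n - 1) := by
    have h2 := aux_ker_range_card_add L
    rw [hkerL, hcardFqn, hqpow, mul_comm q (q ^ (n-1))] at h2
    exact Nat.eq_of_mul_eq_mul_right (by omega) h2
  have hsub : (L.range : Set Fqn) ⊆ (Tr'.ker : Set Fqn) := by
    rintro c ⟨y, rfl⟩
    rw [SetLike.mem_coe, AddMonoidHom.mem_ker]
    exact hTrL y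
  have hseteq : (L.range : Set Fqn) = (Tr'.ker : Set Fqn) := by
    apply Set.eq_of_subset_of_ncard_le hsub _ (Set.toFinite _)
    rw [← Nat.card_coe_set_eq, ← Nat.card_coe_set_eq]
    show Nat.card Tr'.ker ≤ Nat.card L.range
    rw [hkerTr, hrangeL]
  have hmem : ∀ c : Fqn, (Algebra.trace Fq Fqn c = 0) ↔ ∃ y : Fqn, y ^ q - y = c := by
    intro c
    constructor
    · intro h
      have hc : c ∈ (Tr'.ker : Set Fqn) := by
        rw [SetLike.mem_coe, AddMonoidHom.mem_ker]
        exact h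
      rw [← hseteq, SetLike.mem_coe, AddMonoidHom.mem_range] at hc
      obtain ⟨y, hy⟩ := hc
      exact ⟨y, by rw [← hL]; exact hy⟩
    · rintro ⟨y, rfl⟩
      exact hTrL y
  have key1 : ∀ c : Fqn, Fintype.card {y : Fqn // y ^ q - y = c}
      = if Algebra.trace Fq Fqn c = 0 then q else 0 := by
    intro c
    split_ifs with h
    · obtain ⟨y0, hy0⟩ := (hmem c).mp h
      refine Eq.trans (Fintype.card_congr ?_) hker
      have hy0' : L y0 = c := hy0
      exact (Equiv.subtypeEquivRight (fun y => by rw [hL])).trans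
        ((auxFiberEquivAdd L y0 hy0').trans (Equiv.subtypeEquivRight (fun y => by rw [hL])))
    · rw [Fintype.card_eq_zero_iff]
      exact ⟨fun y => h ((hmem c).mpr ⟨y.1, y.2⟩)⟩
  -- kernel of the (q-1)-power map on units
  have hku : Fintype.card {x : Fqnˣ // x ^ (q - 1) = 1} = q - 1 := by
    apply le_antisymm
    · calc Fintype.card {x : Fqnˣ // x ^ (q - 1) = 1}
          ≤ Fintype.card {y : Fqn // y ^ (q - 1) - 1 = 0} := by
            apply Fintype.card_le_of_injective (fun x =>
              ⟨(x.1 : Fqn), by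
                rw [← Units.val_pow_eq_pow_val, x.2, Units.val_one, sub_self]⟩)
            intro x y h
            exact Subtype.ext (Units.ext (congrArg Subtype.val h))
        _ ≤ (Polynomial.X ^ (q - 1) - Polynomial.C 1 : Polynomial Fqn).natDegree := by
            refine aux_card_le_natDegree
              (Polynomial.X_pow_sub_C_ne_zero (by omega) 1) ?_
            intro y hy
            simp only [Polynomial.IsRoot, Polynomial.eval_sub, Polynomial.eval_pow,
              Polynomial.eval_X, Polynomial.eval_C]
            exact hy
        _ = q - 1 := Polynomial.natDegree_X_pow_sub_C
    · have hcardu : Fintype.card Fqˣ = q - 1 := by rw [Fintype.card_units, hcard]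
      have hle : Fintype.card Fqˣ ≤ Fintype.card {x : Fqnˣ // x ^ (q - 1) = 1} := by
        apply Fintype.card_le_of_injective (fun u =>
          ⟨Units.map (algebraMap Fq Fqn).toMonoidHom u, by
            have hu : u ^ (q - 1) = 1 := by
              apply Units.ext
              rw [Units.val_pow_eq_pow_val, Units.val_one, ← hcard]
              exact FiniteField.pow_card_sub_one_eq_one (u : Fq) u.ne_zero
            rw [← map_pow, hu, map_one]⟩)
        intro u v h
        exact Units.map_injective (algebraMap Fq Fqn).injective
          (congrArg Subtype.val h)
      omega
  -- geometric sum
  set m := ∑ i ∈ Finset.range n, q ^ i with hmdef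
  have hm : m * (q - 1) = q ^ n - 1 := aux_geom q (by omega) n
  have hm1 : 0 < m := by
    apply Finset.sum_pos (fun i _ => pow_pos (by omega) i)
    rw [Finset.nonempty_range_iff]
    omega
  set g := powMonoidHom (q - 1) (α := Fqnˣ) with hgdef
  have hg : ∀ x : Fqnˣ, g x = x ^ (q - 1) := fun _ => rfl
  have hcardUnits : Nat.card Fqnˣ = q ^ n - 1 := by
    rw [Nat.card_eq_fintype_card, Fintype.card_units, hcardn]
  have hkerg : Nat.card g.ker = q - 1 := by
    rw [Nat.card_eq_fintype_card, ← hku]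
    exact Fintype.card_congr (Equiv.subtypeEquivRight (fun x => by
      rw [MonoidHom.mem_ker, hg]))
  have hrangeg : Nat.card g.range = m := by
    have h3 := aux_ker_range_card_mul g
    rw [hkerg, hcardUnits, ← hm] at h3
    exact Nat.eq_of_mul_eq_mul_right (by omega) h3
  have hTcard : Fintype.card {ζ : Fqnˣ // ζ ^ m = 1} ≤ m := by
    calc Fintype.card {ζ : Fqnˣ // ζ ^ m = 1}
        ≤ Fintype.card {y : Fqn // y ^ m - 1 = 0} := by
          apply Fintype.card_le_of_injective (fun x =>
            ⟨(x.1 : Fqn), by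
              rw [← Units.val_pow_eq_pow_val, x.2, Units.val_one, sub_self]⟩)
          intro x y h
          exact Subtype.ext (Units.ext (congrArg Subtype.val h))
      _ ≤ (Polynomial.X ^ m - Polynomial.C 1 : Polynomial Fqn).natDegree := by
          refine aux_card_le_natDegree (Polynomial.X_pow_sub_C_ne_zero hm1 1) ?_
          intro y hy
          simp only [Polynomial.IsRoot, Polynomial.eval_sub, Polynomial.eval_pow,
            Polynomial.eval_X, Polynomial.eval_C]
          exact hy
      _ = m := Polynomial.natDegree_X_pow_sub_C
  have hrsub : (g.range : Set Fqnˣ) ⊆ {ζ : Fqnˣ | ζ ^ m = 1} := by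
    rintro ζ ⟨x, rfl⟩
    show (g x) ^ m = 1
    rw [hg, ← pow_mul, mul_comm (q-1) m, hm]
    have : x ^ Fintype.card Fqnˣ = 1 := pow_card_eq_one
    rwa [Fintype.card_units, hcardn] at this
  have hrz : ∀ ζ : Fqnˣ, ζ ^ m = 1 → ∃ x : Fqnˣ, x ^ (q - 1) = ζ := by
    have hEq : {ζ : Fqnˣ | ζ ^ m = 1} = (g.range : Set Fqnˣ) := by
      refine (Set.eq_of_subset_of_ncard_le hrsub ?_ (Set.toFinite _)).symm
      rw [← Nat.card_coe_set_eq, ← Nat.card_coe_set_eq]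
      calc Nat.card {ζ : Fqnˣ | ζ ^ m = 1} = Fintype.card {ζ : Fqnˣ // ζ ^ m = 1} :=
            Nat.card_eq_fintype_card
        _ ≤ m := hTcard
        _ = Nat.card g.range := hrangeg.symm
    intro ζ h
    have : ζ ∈ (g.range : Set Fqnˣ) := by rw [← hEq]; exact h
    obtain ⟨x, hx⟩ := this
    exact ⟨x, hx⟩
  -- norm of α x^(q-1)
  have hnorm_f : ∀ x : Fqnˣ, Algebra.norm Fq (α * (x : Fqn) ^ (q - 1)) = a := by
    intro x
    rw [map_mul, map_pow, hα]
    have hnx : Algebra.norm Fq (x : Fqn) ≠ 0 := Algebra.norm_ne_zero_iff.mpr x.ne_zero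
    have h1 : Algebra.norm Fq (x : Fqn) ^ (q - 1) = 1 := by
      rw [← hcard]
      exact FiniteField.pow_card_sub_one_eq_one _ hnx
    rw [h1, mul_one]
  -- fiber over a fixed z of norm a
  have key2 : ∀ z : Fqn, Algebra.norm Fq z = a →
      Fintype.card {x : Fqnˣ // α * (x : Fqn) ^ (q - 1) = z} = q - 1 := by
    intro z hz
    have hz0 : z ≠ 0 := Algebra.norm_ne_zero_iff.mp (by rw [hz]; exact ha)
    set αu := Units.mk0 α hα0 with hαu
    set zu := Units.mk0 z hz0 with hzu
    set ζ := αu⁻¹ * zu with hζ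
    have hζval : (ζ : Fqn) = α⁻¹ * z := rfl
    have hζm : ζ ^ m = 1 := by
      have hnζ : Algebra.norm Fq (ζ : Fqn) = 1 := by
        rw [hζval, map_mul, hz]
        have h5 : Algebra.norm Fq α * Algebra.norm Fq α⁻¹ = 1 := by
          rw [← map_mul, mul_inv_cancel₀ hα0, map_one]
        rw [hα] at h5
        exact (mul_comm ((Algebra.norm Fq) α⁻¹) a).trans h5
      have h6 := aux_norm_formula q n hq hn1 Fq Fqn hcard hcardn (ζ : Fqn)
      rw [hnζ, map_one] at h6
      apply Units.ext
      rw [Units.val_pow_eq_pow_val, Units.val_one, ← h6]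
    obtain ⟨x0, hx0⟩ := hrz ζ hζm
    have hx0' : g x0 = ζ := hx0
    refine Eq.trans (Fintype.card_congr ?_) hku
    refine (Equiv.subtypeEquivRight (fun x => ?_)).trans
      ((auxFiberEquivMul g x0 hx0').trans (Equiv.subtypeEquivRight (fun x => Iff.rfl)))
    rw [show (g x = ζ) ↔ ((x : Fqn) ^ (q - 1) = α⁻¹ * z) by
      rw [Units.ext_iff, hg, Units.val_pow_eq_pow_val, hζval]]
    constructor
    · intro h
      rw [← h]
      field_simp
    · intro h
      rw [h]
      field_simp
  -- sum over S
  have key3 : Fintype.card {u : Fqnˣ // Algebra.trace Fq Fqn (α * (u : Fqn) ^ (q - 1)) = b}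
      = (q - 1) * Fintype.card {z : Fqn // Algebra.norm Fq z = a ∧ Algebra.trace Fq Fqn z = b} := by
    set S := {z : Fqn // Algebra.norm Fq z = a ∧ Algebra.trace Fq Fqn z = b} with hS
    let f : {u : Fqnˣ // Algebra.trace Fq Fqn (α * (u : Fqn) ^ (q - 1)) = b} → S :=
      fun u => ⟨α * (u.1 : Fqn) ^ (q - 1), ⟨hnorm_f u.1, u.2⟩⟩
    rw [← Fintype.card_congr (Equiv.sigmaFiberEquiv f), Fintype.card_sigma]
    have hfib : ∀ z : S, Fintype.card {u // f u = z} = q - 1 := by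
      intro z
      refine Eq.trans (Fintype.card_congr ?_) (key2 z.1 z.2.1)
      exact
        { toFun := fun u => ⟨u.1.1, congrArg Subtype.val u.2⟩
          invFun := fun x => ⟨⟨x.1, by rw [x.2]; exact z.2.2⟩, Subtype.ext x.2⟩
          left_inv := fun u => Subtype.ext (Subtype.ext rfl)
          right_inv := fun x => Subtype.ext rfl }
    rw [Finset.sum_congr rfl (fun z _ => hfib z), Finset.sum_const, smul_eq_mul,
      Finset.card_univ, mul_comm]
  -- from Fqn-predicate to units-predicate
  have key4 : Fintype.card {x : Fqn // Algebra.trace Fq Fqn (α * x ^ (q - 1) - β) = 0}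
      = Fintype.card {u : Fqnˣ // Algebra.trace Fq Fqn (α * (u : Fqn) ^ (q - 1)) = b} := by
    have hiff : ∀ x : Fqn, (Algebra.trace Fq Fqn (α * x ^ (q - 1) - β) = 0)
        ↔ (Algebra.trace Fq Fqn (α * x ^ (q - 1)) = b) := by
      intro x
      rw [map_sub, hβ, sub_eq_zero]
    have hx0 : ∀ x : Fqn, Algebra.trace Fq Fqn (α * x ^ (q - 1) - β) = 0 → x ≠ 0 := by
      intro x hx h0
      rw [h0, zero_pow hq10, mul_zero, zero_sub, map_neg, hβ, neg_eq_zero] at hx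
      exact hb hx
    apply Fintype.card_congr
    exact
      { toFun := fun x => ⟨Units.mk0 x.1 (hx0 x.1 x.2), (hiff x.1).mp x.2⟩
        invFun := fun u => ⟨(u.1 : Fqn), (hiff _).mpr u.2⟩
        left_inv := fun x => Subtype.ext rfl
        right_inv := fun u => Subtype.ext (Units.ext rfl) }
  -- final assembly
  rw [Nat.card_eq_fintype_card, Nat.card_eq_fintype_card]
  calc Fintype.card {p : Fqn × Fqn // p.2 ^ q - p.2 = α * p.1 ^ (q - 1) - β}
      = ∑ x : Fqn, Fintype.card {y : Fqn // y ^ q - y = α * x ^ (q - 1) - β} := by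
        rw [Fintype.card_congr
          (Equiv.subtypeProdEquivSigmaSubtype (fun x y : Fqn => y ^ q - y = α * x ^ (q - 1) - β)),
          Fintype.card_sigma]
    _ = ∑ x : Fqn, if Algebra.trace Fq Fqn (α * x ^ (q - 1) - β) = 0 then q else 0 :=
        Finset.sum_congr rfl (fun x _ => key1 _)
    _ = q * Fintype.card {x : Fqn // Algebra.trace Fq Fqn (α * x ^ (q - 1) - β) = 0} := by
        rw [Fintype.card_subtype, ← Finset.sum_filter, Finset.sum_const, smul_eq_mul, mul_comm]
    _ = q * ((q - 1) * Fintype.card {z : Fqn // Algebra.norm Fq z = a ∧ Algebra.trace Fq Fqn z = b}) := by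
        rw [key4, key3]
    _ = q * (q - 1) * Fintype.card {z : Fqn // Algebra.norm Fq z = a ∧ Algebra.trace Fq Fqn z = b} :=
        (mul_assoc _ _ _).symm
end

section
/- Let n ≥ 2 be a prime number and let P_n(1,1) be the number of monic irreducible polynomials of degree n over F_2 whose coefficient of T^{n−1} equals 1 and whose constant term equals 1. Then |P_n(1,1) − 2^{n−1}/n| ≤ 1/n, the inequality being between real numbers. -/
open Polynomial Finset IntermediateField

/-- If the minimal polynomial of `x` has degree equal to `[K : F]`, then the trace of `x`
is the negative of the next coefficient of its minimal polynomial. -/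
theorem stmt16_traceCoeff {F K : Type*} [Field F] [Field K] [Algebra F K]
    [FiniteDimensional F K] (x : K) (hd : (minpoly F x).natDegree = Module.finrank F K) :
    Algebra.trace F K x = -(minpoly F x).nextCoeff := by
  have hx : IsIntegral F x := Algebra.IsIntegral.isIntegral x
  have hL : Module.finrank F F⟮x⟯ = Module.finrank F K := by
    rw [IntermediateField.adjoin.finrank hx, hd]
  have hLK : Module.finrank (↥F⟮x⟯) K = 1 := by
    have := Module.finrank_mul_finrank F (↥F⟮x⟯) K
    have hpos : 0 < Module.finrank F F⟮x⟯ := Module.finrank_pos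
    nlinarith [Module.finrank_pos (R := ↥F⟮x⟯) (M := K)]
  have hxg : x = algebraMap (↥F⟮x⟯) K (IntermediateField.AdjoinSimple.gen F x) := rfl
  have h1 : Algebra.trace F K x = Algebra.trace F (↥F⟮x⟯)
      (Algebra.trace (↥F⟮x⟯) K
        (algebraMap (↥F⟮x⟯) K (IntermediateField.AdjoinSimple.gen F x))) := by
    rw [← Algebra.trace_trace (S := ↥F⟮x⟯), ← hxg]
  rw [h1, Algebra.trace_algebraMap, hLK, one_smul]
  have h2 := (IntermediateField.adjoin.powerBasis hx).trace_gen_eq_nextCoeff_minpoly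
  rw [IntermediateField.adjoin.powerBasis_gen] at h2
  rw [h2, IntermediateField.minpoly_gen]

/-- In a finite field of characteristic 2, exactly half the elements have trace 1. -/
theorem stmt16_cardT {K : Type*} [Field K] [Fintype K] [Algebra (ZMod 2) K] :
    (univ.filter (fun x : K => Algebra.trace (ZMod 2) K x = 1)).card * 2 = Fintype.card K := by
  classical
  have : FiniteDimensional (ZMod 2) K := inferInstance
  obtain ⟨a, ha⟩ := Algebra.trace_surjective (ZMod 2) K 1
  have haa : a + a = 0 := by
    rw [← two_smul (ZMod 2) a]
    have : (2 : ZMod 2) = 0 := by decide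
    rw [this, zero_smul]
  have hsplit := Finset.card_filter_add_card_filter_not
    (s := (univ : Finset K)) (p := fun x => Algebra.trace (ZMod 2) K x = 1)
  have heq : (univ.filter (fun x : K => ¬ Algebra.trace (ZMod 2) K x = 1)).card
      = (univ.filter (fun x : K => Algebra.trace (ZMod 2) K x = 1)).card := by
    apply Finset.card_bij (fun x _ => x + a)
    · intro x hx
      simp only [mem_filter, mem_univ, true_and] at hx ⊢
      rw [map_add, ha]
      have : ∀ c : ZMod 2, c ≠ 1 → c + 1 = 1 := by decide
      exact this _ hx
    · intro x hx y hy h; exact add_right_cancel h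
    · intro y hy
      simp only [mem_filter, mem_univ, true_and] at hy
      refine ⟨y + a, ?_, by rw [add_assoc, haa, add_zero]⟩
      simp only [mem_filter, mem_univ, true_and, map_add, ha, hy]
      decide
  rw [heq, Finset.card_univ] at hsplit
  omega

/-- The main count: in a field with `2 ^ n` elements (`n` prime), the number of monic
irreducible polynomials of degree `n` over `F_2` with next coefficient and constant
coefficient both `1` satisfies `n * P + n % 2 = 2 ^ (n - 1)`. -/
theorem stmt16_count {K : Type*} [Field K] [Fintype K] [Algebra (ZMod 2) K]
    (n : ℕ) (hn : n.Prime) (hcard : Fintype.card K = 2 ^ n) :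
    n * Nat.card {f : Polynomial (ZMod 2) // f.Monic ∧ Irreducible f ∧
        f.natDegree = n ∧ f.coeff (n - 1) = 1 ∧ f.coeff 0 = 1} + n % 2 = 2 ^ (n - 1) := by
  classical
  have hn2 : 2 ≤ n := hn.two_le
  have fd : FiniteDimensional (ZMod 2) K := inferInstance
  have hnormal : Normal (ZMod 2) K := inferInstance
  have hfr : Module.finrank (ZMod 2) K = n := by
    have h := Module.card_eq_pow_finrank (K := ZMod 2) (V := K)
    rw [ZMod.card, hcard] at h
    exact (Nat.pow_right_injective le_rfl h.symm)
  have key : ∀ x : K, (minpoly (ZMod 2) x).natDegree = n →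
      Algebra.trace (ZMod 2) K x = (minpoly (ZMod 2) x).coeff (n - 1) := by
    intro x hd
    rw [stmt16_traceCoeff x (by rw [hd, hfr]), nextCoeff_of_natDegree_pos (by omega), hd]
    have : ∀ c : ZMod 2, -c = c := by decide
    rw [this]
  set Q : Polynomial (ZMod 2) → Prop := fun f => f.Monic ∧ Irreducible f ∧
      f.natDegree = n ∧ f.coeff (n - 1) = 1 ∧ f.coeff 0 = 1 with hQ
  set T : Finset K := univ.filter (fun x : K => Algebra.trace (ZMod 2) K x = 1) with hT
  set S : Finset K := univ.filter (fun x : K => Algebra.trace (ZMod 2) K x = 1 ∧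
      (minpoly (ZMod 2) x).natDegree = n) with hS
  have hdeg : ∀ x : K,
      (minpoly (ZMod 2) x).natDegree = 1 ∨ (minpoly (ZMod 2) x).natDegree = n := by
    intro x
    have hx : IsIntegral (ZMod 2) x := Algebra.IsIntegral.isIntegral x
    have h := minpoly.degree_dvd hx
    rw [hfr] at h
    exact hn.eq_one_or_self_of_dvd _ h
  have htr1 : Algebra.trace (ZMod 2) K 1 = (n : ZMod 2) := by
    have : (1 : K) = algebraMap (ZMod 2) K 1 := by rw [map_one]
    rw [this, Algebra.trace_algebraMap, hfr, nsmul_eq_mul, mul_one]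
  have hTcard : T.card * 2 = 2 ^ n := by rw [← hcard]; exact stmt16_cardT
  -- Step 2 : S.card + n % 2 = T.card
  have hTS : S.card + n % 2 = T.card := by
    have hsplit := Finset.card_filter_add_card_filter_not
      (s := T) (p := fun x => (minpoly (ZMod 2) x).natDegree = n)
    have hfS : T.filter (fun x => (minpoly (ZMod 2) x).natDegree = n) = S := by
      rw [hT, hS, filter_filter]
    have hmem : ∀ x : K, (x ∈ T ∧ ¬ (minpoly (ZMod 2) x).natDegree = n) ↔
        (x = 1 ∧ (n : ZMod 2) = 1) := by
      intro x
      simp only [hT, mem_filter, mem_univ, true_and]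
      have hc01 : ∀ c : ZMod 2, c = 0 ∨ c = 1 := by decide
      constructor
      · rintro ⟨hxT, hdn⟩
        have h1 : (minpoly (ZMod 2) x).natDegree = 1 := (hdeg x).resolve_right hdn
        obtain ⟨c, hc⟩ := minpoly.natDegree_eq_one_iff.mp h1
        rcases hc01 c with rfl | rfl
        · rw [map_zero] at hc
          rw [← hc, map_zero] at hxT
          exact absurd hxT (by decide)
        · rw [map_one] at hc
          rw [← hc, htr1] at hxT
          exact ⟨hc.symm, hxT⟩
      · rintro ⟨rfl, hn1⟩
        refine ⟨by rw [htr1, hn1], ?_⟩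
        have : (minpoly (ZMod 2) (1 : K)).natDegree = 1 :=
          minpoly.natDegree_eq_one_iff.mpr ⟨1, map_one _⟩
        omega
    have hcard2 : (T.filter (fun x => ¬ (minpoly (ZMod 2) x).natDegree = n)).card = n % 2 := by
      rcases Nat.mod_two_eq_zero_or_one n with hpar | hpar
      · have hnz : (n : ZMod 2) ≠ 1 := by
          rw [show ((n : ℕ) : ZMod 2) = ((n % 2 : ℕ) : ZMod 2) from (ZMod.natCast_mod n 2).symm,
            hpar]
          decide
        rw [hpar, Finset.card_eq_zero]
        ext x
        simp only [mem_filter, Finset.notMem_empty, iff_false]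
        intro hx
        exact hnz ((hmem x).mp hx).2
      · have hone : (n : ZMod 2) = 1 := by
          rw [show ((n : ℕ) : ZMod 2) = ((n % 2 : ℕ) : ZMod 2) from (ZMod.natCast_mod n 2).symm,
            hpar]
          exact Nat.cast_one
        rw [hpar]
        have : T.filter (fun x => ¬ (minpoly (ZMod 2) x).natDegree = n) = {(1 : K)} := by
          ext x
          simp only [mem_filter, Finset.mem_singleton]
          rw [hmem x]
          exact ⟨fun h => h.1, fun h => ⟨h, hone⟩⟩
        rw [this, Finset.card_singleton]
    rw [hfS, hcard2] at hsplit
    omega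
  -- minimal polynomials of elements of S satisfy Q
  have hQS : ∀ x ∈ S, Q (minpoly (ZMod 2) x) := by
    intro x hx
    simp only [hS, mem_filter, mem_univ, true_and] at hx
    obtain ⟨htr, hd⟩ := hx
    have hint : IsIntegral (ZMod 2) x := Algebra.IsIntegral.isIntegral x
    have hx0 : x ≠ 0 := by
      intro h
      rw [h, minpoly.zero] at hd
      simp at hd; omega
    refine ⟨minpoly.monic hint, minpoly.irreducible hint, hd, ?_, ?_⟩
    · rw [← key x hd, htr]
    · have := minpoly.coeff_zero_ne_zero hint hx0
      revert this
      generalize (minpoly (ZMod 2) x).coeff 0 = c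
      revert c; decide
  -- every polynomial satisfying Q is the minimal polynomial of some element of S
  have hSQ : ∀ f : Polynomial (ZMod 2), Q f → ∃ x ∈ S, minpoly (ZMod 2) x = f := by
    intro f hf
    obtain ⟨hmon, hirr, hdeg', hc1, hc0⟩ := hf
    haveI : Fact (Irreducible f) := ⟨hirr⟩
    have hf0 : f ≠ 0 := hirr.ne_zero
    let A := AdjoinRoot f
    let pb : PowerBasis (ZMod 2) A := AdjoinRoot.powerBasis hf0
    haveI : Module.Finite (ZMod 2) A := pb.finite
    haveI : Fintype A := Module.fintypeOfFintype pb.basis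
    have hfrA : Module.finrank (ZMod 2) A = n := by
      rw [pb.finrank, AdjoinRoot.powerBasis_dim, hdeg']
    have hcardA : Fintype.card A = Fintype.card K := by
      rw [Module.card_eq_pow_finrank (K := ZMod 2) (V := A), ZMod.card, hfrA, hcard]
    let e := FiniteField.algEquivOfCardEq (p := 2) (K := A) (K' := K) hcardA
    have h0 : aeval (AdjoinRoot.root f) f = 0 := by
      rw [aeval_def, AdjoinRoot.algebraMap_eq]
      exact AdjoinRoot.eval₂_root f
    have hx0 : aeval (e (AdjoinRoot.root f)) f = 0 := by
      simpa [h0] using (aeval_algHom_apply (↑e : A →ₐ[ZMod 2] K) (AdjoinRoot.root f) f)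
    set x : K := e (AdjoinRoot.root f)
    have hmin : minpoly (ZMod 2) x = f := (minpoly.eq_of_irreducible_of_monic hirr hx0 hmon).symm
    have hdx : (minpoly (ZMod 2) x).natDegree = n := by rw [hmin, hdeg']
    refine ⟨x, ?_, hmin⟩
    simp only [hS, mem_filter, mem_univ, true_and]
    exact ⟨by rw [key x hdx, hmin, hc1], hdx⟩
  -- each fiber has exactly n elements
  have hfiber : ∀ f : Polynomial (ZMod 2), Q f →
      (S.filter (fun x => minpoly (ZMod 2) x = f)).card = n := by
    intro f hf
    obtain ⟨x₀, hx₀S, hx₀⟩ := hSQ f hf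
    obtain ⟨hmon, hirr, hdeg', hc1, hc0⟩ := hf
    have hf0 : f ≠ 0 := hirr.ne_zero
    have hsplits : Splits (f.map (algebraMap (ZMod 2) K)) := hx₀ ▸ Normal.splits hnormal x₀
    have hsep : f.Separable := PerfectField.separable_of_irreducible hirr
    have hset : S.filter (fun x => minpoly (ZMod 2) x = f) = (f.aroots K).toFinset := by
      ext y
      simp only [hS, mem_filter, Multiset.mem_toFinset, mem_aroots, mem_univ, true_and]
      constructor
      · rintro ⟨_, rfl⟩
        exact ⟨hf0, minpoly.aeval _ _⟩
      · rintro ⟨_, hy⟩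
        have hmin : minpoly (ZMod 2) y = f :=
          (minpoly.eq_of_irreducible_of_monic hirr hy hmon).symm
        have hdy : (minpoly (ZMod 2) y).natDegree = n := by rw [hmin, hdeg']
        exact ⟨⟨by rw [key y hdy, hmin, hc1], hdy⟩, hmin⟩
    have hnodup : (f.aroots K).Nodup := nodup_roots hsep.map
    rw [hset, Multiset.toFinset_card_of_nodup hnodup]
    have h := hsplits.natDegree_eq_card_roots
    rw [natDegree_map] at h
    rw [aroots_def]
    omega
  -- fiberwise counting
  set B : Finset (Polynomial (ZMod 2)) := S.image (minpoly (ZMod 2)) with hB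
  have hBQ : ∀ f ∈ B, Q f := by
    intro f hf
    obtain ⟨x, hx, rfl⟩ := Finset.mem_image.mp hf
    exact hQS x hx
  have hQB : ∀ f : Polynomial (ZMod 2), Q f → f ∈ B := by
    intro f hf
    obtain ⟨x, hx, hmin⟩ := hSQ f hf
    exact hmin ▸ Finset.mem_image_of_mem _ hx
  have hcount : S.card = n * B.card := by
    rw [Finset.card_eq_sum_card_fiberwise (f := minpoly (ZMod 2)) (t := B)
      (fun x hx => Finset.mem_image_of_mem _ hx)]
    rw [Finset.sum_congr rfl (fun f hf => hfiber f (hBQ f hf))]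
    rw [Finset.sum_const, smul_eq_mul, mul_comm]
  have hNat : Nat.card {f : Polynomial (ZMod 2) // Q f} = B.card := by
    have hset : {f : Polynomial (ZMod 2) | Q f} = ↑B := by
      ext f
      simp only [Set.mem_setOf_eq, Finset.mem_coe]
      exact ⟨fun h => hQB f h, fun h => hBQ f h⟩
    calc Nat.card {f : Polynomial (ZMod 2) // Q f}
        = ({f : Polynomial (ZMod 2) | Q f} : Set _).ncard := Nat.card_coe_set_eq _
      _ = (↑B : Set (Polynomial (ZMod 2))).ncard := by rw [hset]
      _ = B.card := Set.ncard_coe_finset B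
  have hpow : 2 ^ n = 2 ^ (n - 1) * 2 := by
    rw [← pow_succ]
    congr 1
    omega
  rw [hQ] at hNat
  rw [hNat]
  omega

/-- for prime `n`, `|P_n(1,1) - 2^(n-1)/n| ≤ 1/n` over `F_2`. -/
theorem stmt16 (n : ℕ) (hn : n.Prime)
    (P : ℕ)
    (hP : P = Nat.card {f : Polynomial (ZMod 2) // f.Monic ∧ Irreducible f ∧
        f.natDegree = n ∧ f.coeff (n - 1) = 1 ∧ f.coeff 0 = 1}) :
    |(P : ℝ) - 2 ^ (n - 1) / (n : ℝ)| ≤ 1 / (n : ℝ) := by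
  haveI : Fintype (GaloisField 2 n) := Fintype.ofFinite _
  have hcard : Fintype.card (GaloisField 2 n) = 2 ^ n := by
    rw [← Nat.card_eq_fintype_card]
    exact GaloisField.card 2 n hn.ne_zero
  have hmain := stmt16_count (K := GaloisField 2 n) n hn hcard
  rw [← hP] at hmain
  have hn0 : (0 : ℝ) < (n : ℝ) := by exact_mod_cast hn.pos
  have h1 : (n : ℝ) * P + ((n % 2 : ℕ) : ℝ) = 2 ^ (n - 1) := by
    exact_mod_cast congrArg (Nat.cast : ℕ → ℝ) hmain
  have hr1 : ((n % 2 : ℕ) : ℝ) ≤ 1 := by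
    have : n % 2 ≤ 1 := by omega
    exact_mod_cast this
  have hr0 : (0 : ℝ) ≤ ((n % 2 : ℕ) : ℝ) := by positivity
  have hkey : (P : ℝ) - 2 ^ (n - 1) / (n : ℝ) = -(((n % 2 : ℕ) : ℝ) / (n : ℝ)) := by
    field_simp
    linarith [h1]
  rw [hkey, abs_neg, abs_div, abs_of_nonneg hr0, abs_of_pos hn0]
  gcongr
end
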